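/- Proposition 2 (total Lebesgue measure of AdaHedge-weighted majority vote sets): Let K ≥ 2 and T ≥ 1. For each t = 1, …, T let C_1^{(t)}, …, C_K^{(t)} be Lebesgue-measurable subsets of ℝ of finite Lebesgue measure, and set the expert losses to ℓ_k^{(t)} = λ(C_k^{(t)}). Let w^{(t)} be the AdaHedge weights (defined in the context) for these losses, and let C^{(t)} := {y ∈ ℝ : ∑_{k=1}^K w_k^{(t)}·1{y ∈ C_k^{(t)}} > 1/2} be the round-t weighted majority vote set, with L_M^{(T)} = ∑_{t=1}^T λ(C^{(t)}). With L_*^{(T)} = min_k L_k^{(T)}, L_+^{(T)} = ∑_{t=1}^T max_k ℓ_k^{(t)}, L_−^{(T)} = ∑_{t=1}^T min_k ℓ_k^{(t)}, s^{(t)} = max_k ℓ_k^{(t)} − min_k ℓ_k^{(t)} and S^{(T)} = max_{1≤t≤T} s^{(t)}, it holds that L_M^{(T)} ≤ 2·L_*^{(T)} + 4·( S^{(T)}·(ln K)·(L_+^{(T)} − L_*^{(T)})·(L_*^{(T)} − L_−^{(T)}) / (L_+^{(T)} − L_−^{(T)}) )^{1/2} + 2·S^{(T)}·((16/3)·ln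 K + 2), where the fraction is interpreted as 0 when L_+^{(T)} = L_−^{(T)}. -/

import Mathlib

open Finset

/-- Cumulative loss of expert `k` after `t` rounds: `L_k^{(t)} = ∑_{s<t} ℓ_k^{(s)}`. -/
noncomputable def cumLoss (K : ℕ) (l : ℕ → Fin K → ℝ) (t : ℕ) (k : Fin K) : ℝ :=
  ∑ s ∈ Finset.range t, l s k

/- AdaHedge weights in round `t`, given the cumulative mixability gap `Δ` so far.
If `Δ > 0`, these are the exponential weights with learning rate `η = ln K / Δ`;
if `Δ ≤ 0` (i.e. `Δ = 0`, corresponding to `η = ∞`), the weight is uniform on the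
set of minimizers of the cumulative loss. -/
open Classical in
noncomputable def ahWeight (K : ℕ) (l : ℕ → Fin K → ℝ) (Δ : ℝ) (t : ℕ) (k : Fin K) : ℝ :=
  if 0 < Δ then
    Real.exp (-(Real.log K / Δ) * cumLoss K l t k) /
      ∑ j : Fin K, Real.exp (-(Real.log K / Δ) * cumLoss K l t j)
  else
    if cumLoss K l t k = ⨅ j, cumLoss K l t j then
      1 / ((Finset.univ.filter fun j : Fin K =>
        cumLoss K l t j = ⨅ j', cumLoss K l t j').card : ℝ)
    else 0

/-- Hedge loss in round `t`: `h^{(t)} = ∑ k, w_k^{(t)} ℓ_k^{(t)}`. -/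
noncomputable def ahHedgeLoss (K : ℕ) (l : ℕ → Fin K → ℝ) (Δ : ℝ) (t : ℕ) : ℝ :=
  ∑ k : Fin K, ahWeight K l Δ t k * l t k

/-- Mix loss in round `t`: `m^{(t)} = −(1/η)·ln(∑ k, w_k^{(t)} exp(−η ℓ_k^{(t)}))`
with `η = ln K / Δ` when `Δ > 0`, and `min_k L_k^{(t)} − min_k L_k^{(t−1)}` when
`Δ = 0` (corresponding to `η = ∞`). -/
noncomputable def ahMixLoss (K : ℕ) (l : ℕ → Fin K → ℝ) (Δ : ℝ) (t : ℕ) : ℝ :=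
  if 0 < Δ then
    -(Δ / Real.log K) *
      Real.log (∑ k : Fin K, ahWeight K l Δ t k * Real.exp (-(Real.log K / Δ) * l t k))
  else (⨅ k, cumLoss K l (t + 1) k) - ⨅ k, cumLoss K l t k

/-- The AdaHedge cumulative mixability gap: `Δ^{(0)} = 0` and
`Δ^{(t+1)} = Δ^{(t)} + (h^{(t)} − m^{(t)})`. -/
noncomputable def ahDelta (K : ℕ) (l : ℕ → Fin K → ℝ) : ℕ → ℝ
  | 0 => 0
  | t + 1 =>
    ahDelta K l t +
      (ahHedgeLoss K l (ahDelta K l t) t - ahMixLoss K l (ahDelta K l t) t)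


section Basics
variable {K : ℕ}

lemma finInf_le [NeZero K] (f : Fin K → ℝ) (k : Fin K) : (⨅ j, f j) ≤ f k :=
  ciInf_le (Finite.bddBelow_range f) k

lemma le_finSup [NeZero K] (f : Fin K → ℝ) (k : Fin K) : f k ≤ ⨆ j, f j :=
  le_ciSup (Finite.bddAbove_range f) k

lemma finInf_nonneg [NeZero K] (f : Fin K → ℝ) (h : ∀ k, 0 ≤ f k) : 0 ≤ ⨅ j, f j :=
  le_ciInf h

lemma weighted_le_of_le [NeZero K] (w f : Fin K → ℝ) (hw : ∀ k, 0 ≤ w k)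
    (hs : ∑ k, w k = 1) (c : ℝ) (hf : ∀ k, f k ≤ c) : ∑ k, w k * f k ≤ c := by
  calc ∑ k, w k * f k ≤ ∑ k, w k * c :=
        Finset.sum_le_sum (fun k _ => mul_le_mul_of_nonneg_left (hf k) (hw k))
    _ = c := by rw [← Finset.sum_mul, hs, one_mul]

lemma le_weighted_of_le [NeZero K] (w f : Fin K → ℝ) (hw : ∀ k, 0 ≤ w k)
    (hs : ∑ k, w k = 1) (c : ℝ) (hf : ∀ k, c ≤ f k) : c ≤ ∑ k, w k * f k := by
  calc (c:ℝ) = ∑ k, w k * c := by rw [← Finset.sum_mul, hs, one_mul]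
    _ ≤ ∑ k, w k * f k :=
        Finset.sum_le_sum (fun k _ => mul_le_mul_of_nonneg_left (hf k) (hw k))

end Basics
section Weights
variable {K : ℕ} (l : ℕ → Fin K → ℝ)

lemma ahWeight_nonneg [NeZero K] (Δ : ℝ) (t : ℕ) (k : Fin K) :
    0 ≤ ahWeight K l Δ t k := by
  unfold ahWeight
  split
  · exact div_nonneg (Real.exp_pos _).le
      (Finset.sum_nonneg fun j _ => (Real.exp_pos _).le)
  · split
    · positivity
    · exact le_refl _

lemma ahWeight_sum_one [NeZero K] (Δ : ℝ) (t : ℕ) :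
    ∑ k, ahWeight K l Δ t k = 1 := by
  classical
  unfold ahWeight
  split
  · rw [← Finset.sum_div]
    exact div_self (ne_of_gt (Finset.sum_pos (fun j _ => Real.exp_pos _) univ_nonempty))
  · rw [Finset.sum_ite, Finset.sum_const, Finset.sum_const, smul_zero, add_zero]
    obtain ⟨k0, hk0⟩ := exists_eq_ciInf_of_finite (f := fun j => cumLoss K l t j)
    have hne : (Finset.univ.filter fun j : Fin K =>
        cumLoss K l t j = ⨅ j', cumLoss K l t j').Nonempty := ⟨k0, by simp [hk0]⟩
    have hcard : (0:ℝ) < (Finset.univ.filter fun j : Fin K =>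
        cumLoss K l t j = ⨅ j', cumLoss K l t j').card := by
      exact_mod_cast Finset.card_pos.mpr hne
    rw [nsmul_eq_mul]
    field_simp

lemma ahWeight_pos_of_pos [NeZero K] {Δ : ℝ} (hΔ : 0 < Δ) (t : ℕ) (k : Fin K) :
    0 < ahWeight K l Δ t k := by
  unfold ahWeight
  rw [if_pos hΔ]
  exact div_pos (Real.exp_pos _) (Finset.sum_pos (fun j _ => Real.exp_pos _) univ_nonempty)

end Weights
section Loss
variable {K : ℕ} (l : ℕ → Fin K → ℝ)

lemma cumLoss_succ (t : ℕ) (k : Fin K) :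
    cumLoss K l (t+1) k = cumLoss K l t k + l t k := Finset.sum_range_succ _ _

lemma cumLoss_zero (k : Fin K) : cumLoss K l 0 k = 0 := Finset.sum_range_zero _

lemma log_K_pos {K : ℕ} (hK : 2 ≤ K) : 0 < Real.log K :=
  Real.log_pos (by exact_mod_cast Nat.lt_of_lt_of_le Nat.one_lt_two hK)

lemma neZero_of_two_le {K : ℕ} (hK : 2 ≤ K) : NeZero K := ⟨by omega⟩

lemma hedge_le_sup [NeZero K] (Δ : ℝ) (t : ℕ) :
    ahHedgeLoss K l Δ t ≤ ⨆ k, l t k :=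
  weighted_le_of_le _ _ (ahWeight_nonneg l Δ t) (ahWeight_sum_one l Δ t) _
    (fun k => le_finSup _ k)

lemma inf_le_hedge [NeZero K] (Δ : ℝ) (t : ℕ) :
    (⨅ k, l t k) ≤ ahHedgeLoss K l Δ t :=
  le_weighted_of_le _ _ (ahWeight_nonneg l Δ t) (ahWeight_sum_one l Δ t) _
    (fun k => finInf_le _ k)

lemma mixZ_pos [NeZero K] {Δ : ℝ} (hΔ : 0 < Δ) (t : ℕ) :
    0 < ∑ k, ahWeight K l Δ t k * Real.exp (-(Real.log K / Δ) * l t k) :=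
  Finset.sum_pos (fun k _ => mul_pos (ahWeight_pos_of_pos l hΔ t k) (Real.exp_pos _))
    univ_nonempty

lemma mix_le_hedge (hK : 2 ≤ K) (Δ : ℝ) (t : ℕ) :
    ahMixLoss K l Δ t ≤ ahHedgeLoss K l Δ t := by
  haveI : NeZero K := neZero_of_two_le hK
  have hc : 0 < Real.log K := log_K_pos hK
  unfold ahMixLoss
  split
  · rename_i hΔ
    set η : ℝ := Real.log K / Δ with hη
    have hηpos : 0 < η := div_pos hc hΔ
    set w : Fin K → ℝ := ahWeight K l Δ t with hw
    set Z : ℝ := ∑ k, w k * Real.exp (-η * l t k) with hZdef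
    have hZ : 0 < Z := mixZ_pos l hΔ t
    have hJ : Real.exp (∑ k, w k • (-η * l t k)) ≤ ∑ k, w k • Real.exp (-η * l t k) :=
      convexOn_exp.map_sum_le (fun k _ => ahWeight_nonneg l Δ t k)
        (ahWeight_sum_one l Δ t) (fun k _ => Set.mem_univ _)
    have hsum : ∑ k, w k • (-η * l t k) = -η * ahHedgeLoss K l Δ t := by
      unfold ahHedgeLoss
      rw [Finset.mul_sum]
      exact Finset.sum_congr rfl fun k _ => by simp [smul_eq_mul]; ring
    have hJ' : Real.exp (-η * ahHedgeLoss K l Δ t) ≤ Z := by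
      rw [← hsum, hZdef]; simpa only [smul_eq_mul] using hJ
    have hlog : -η * ahHedgeLoss K l Δ t ≤ Real.log Z := (Real.le_log_iff_exp_le hZ).2 hJ'
    have h2 : -(Δ / Real.log K) * Real.log Z ≤
        -(Δ / Real.log K) * (-η * ahHedgeLoss K l Δ t) :=
      mul_le_mul_of_nonpos_left hlog (neg_nonpos.mpr (by positivity))
    have h3 : -(Δ / Real.log K) * (-η * ahHedgeLoss K l Δ t) = ahHedgeLoss K l Δ t := by
      rw [hη]; field_simp
    linarith [h2, h3.le]
  · rename_i hΔ
    -- Δ ≤ 0 branch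
    obtain ⟨k0, hk0⟩ := exists_eq_ciInf_of_finite (f := fun j => cumLoss K l t j)
    set m : ℝ := (⨅ k, cumLoss K l (t+1) k) - ⨅ k, cumLoss K l t k with hm
    have key : ∀ k : Fin K, ahWeight K l Δ t k * m ≤ ahWeight K l Δ t k * l t k := by
      intro k
      by_cases hP : cumLoss K l t k = ⨅ j, cumLoss K l t j
      · have hmle : m ≤ l t k := by
          have h1 : (⨅ j, cumLoss K l (t+1) j) ≤ cumLoss K l t k + l t k := by
            rw [← cumLoss_succ]; exact finInf_le _ k
          rw [hm, hP] at *
          linarith [h1]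
        exact mul_le_mul_of_nonneg_left hmle (ahWeight_nonneg l Δ t k)
      · have : ahWeight K l Δ t k = 0 := by
          unfold ahWeight
          rw [if_neg hΔ, if_neg hP]
        simp [this]
    have := Finset.sum_le_sum (fun k (_ : k ∈ Finset.univ) => key k)
    rw [← Finset.sum_mul, ahWeight_sum_one l Δ t, one_mul] at this
    exact this

end Loss
section Mix2
variable {K : ℕ} (l : ℕ → Fin K → ℝ)

lemma inf_le_mix (hK : 2 ≤ K) (Δ : ℝ) (t : ℕ) :
    (⨅ k, l t k) ≤ ahMixLoss K l Δ t := by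
  haveI : NeZero K := neZero_of_two_le hK
  have hc : 0 < Real.log K := log_K_pos hK
  unfold ahMixLoss
  split
  · rename_i hΔ
    set η : ℝ := Real.log K / Δ with hη
    have hηpos : 0 < η := div_pos hc hΔ
    set Z : ℝ := ∑ k, ahWeight K l Δ t k * Real.exp (-η * l t k) with hZdef
    have hZ : 0 < Z := mixZ_pos l hΔ t
    have hle : Z ≤ Real.exp (-η * ⨅ k, l t k) := by
      apply weighted_le_of_le _ _ (ahWeight_nonneg l Δ t) (ahWeight_sum_one l Δ t)
      intro k
      apply Real.exp_le_exp.mpr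
      have := finInf_le (fun j => l t j) k
      nlinarith [hηpos]
    have hlog : Real.log Z ≤ -η * ⨅ k, l t k := by
      rw [Real.log_le_iff_le_exp hZ]; exact hle
    have h2 : -(Δ / Real.log K) * (-η * ⨅ k, l t k) ≤ -(Δ / Real.log K) * Real.log Z :=
      mul_le_mul_of_nonpos_left hlog (neg_nonpos.mpr (by positivity))
    have h3 : -(Δ / Real.log K) * (-η * ⨅ k, l t k) = ⨅ k, l t k := by
      rw [hη]; field_simp
    linarith [h2, h3]
  · rename_i hΔ
    have : ∀ k : Fin K, (⨅ j, cumLoss K l t j) + (⨅ j, l t j) ≤ cumLoss K l (t+1) k := by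
      intro k
      rw [cumLoss_succ]
      exact add_le_add (finInf_le _ k) (finInf_le _ k)
    have h2 := le_ciInf this
    linarith [h2]

end Mix2

section Delta
variable {K : ℕ} (l : ℕ → Fin K → ℝ)

lemma ahDelta_succ (t : ℕ) : ahDelta K l (t+1) = ahDelta K l t +
    (ahHedgeLoss K l (ahDelta K l t) t - ahMixLoss K l (ahDelta K l t) t) := rfl

lemma gap_nonneg (hK : 2 ≤ K) (Δ : ℝ) (t : ℕ) :
    0 ≤ ahHedgeLoss K l Δ t - ahMixLoss K l Δ t :=
  sub_nonneg.mpr (mix_le_hedge l hK Δ t)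

lemma gap_le (hK : 2 ≤ K) (Δ : ℝ) (t : ℕ) :
    ahHedgeLoss K l Δ t - ahMixLoss K l Δ t ≤ (⨆ k, l t k) - ⨅ k, l t k := by
  haveI : NeZero K := neZero_of_two_le hK
  have h1 := hedge_le_sup l Δ t
  have h2 := inf_le_mix l hK Δ t
  linarith

lemma ahDelta_nonneg (hK : 2 ≤ K) (t : ℕ) : 0 ≤ ahDelta K l t := by
  induction t with
  | zero => exact le_refl 0
  | succ t ih =>
    rw [ahDelta_succ]
    have := gap_nonneg l hK (ahDelta K l t) t
    linarith

lemma ahDelta_le_succ (hK : 2 ≤ K) (t : ℕ) : ahDelta K l t ≤ ahDelta K l (t+1) := by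
  rw [ahDelta_succ]
  have := gap_nonneg l hK (ahDelta K l t) t
  linarith

end Delta
section Phi
variable {K : ℕ} (l : ℕ → Fin K → ℝ)

noncomputable def Phi (K : ℕ) (l : ℕ → Fin K → ℝ) (Δ : ℝ) (t : ℕ) : ℝ :=
  if 0 < Δ then
    -(Δ / Real.log K) *
      Real.log ((K:ℝ)⁻¹ * ∑ k : Fin K, Real.exp (-(Real.log K / Δ) * cumLoss K l t k))
  else ⨅ k, cumLoss K l t k

lemma sum_exp_pos' [NeZero K] (g : Fin K → ℝ) : 0 < ∑ j, Real.exp (g j) :=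
  Finset.sum_pos (fun j _ => Real.exp_pos _) univ_nonempty

lemma Phi_zero (hK : 2 ≤ K) (Δ : ℝ) : Phi K l Δ 0 = 0 := by
  haveI : NeZero K := neZero_of_two_le hK
  have hKpos : (0:ℝ) < (K:ℝ) := by exact_mod_cast Nat.pos_of_ne_zero (by omega)
  unfold Phi
  split
  · have : ∀ k : Fin K, Real.exp (-(Real.log K / Δ) * cumLoss K l 0 k) = 1 := by
      intro k; rw [cumLoss_zero]; simp
    rw [Finset.sum_congr rfl (fun k _ => this k), Finset.sum_const, Finset.card_univ,
      Fintype.card_fin, nsmul_eq_mul, mul_one, inv_mul_cancel₀ (ne_of_gt hKpos),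
      Real.log_one, mul_zero]
  · have : ∀ k : Fin K, cumLoss K l 0 k = 0 := cumLoss_zero l
    simp [this, ciInf_const]

lemma mix_eq_phi (hK : 2 ≤ K) (Δ : ℝ) (t : ℕ) :
    ahMixLoss K l Δ t = Phi K l Δ (t+1) - Phi K l Δ t := by
  haveI : NeZero K := neZero_of_two_le hK
  have hc : 0 < Real.log K := log_K_pos hK
  have hKpos : (0:ℝ) < (K:ℝ) := by exact_mod_cast Nat.pos_of_ne_zero (by omega)
  unfold ahMixLoss Phi
  split
  · rename_i hΔ
    set η : ℝ := Real.log K / Δ with hη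
    set Zt : ℝ := ∑ j : Fin K, Real.exp (-η * cumLoss K l t j) with hZt
    set Zt1 : ℝ := ∑ j : Fin K, Real.exp (-η * cumLoss K l (t+1) j) with hZt1
    have hZtpos : 0 < Zt := sum_exp_pos' _
    have hZt1pos : 0 < Zt1 := sum_exp_pos' _
    have hw : ∀ k : Fin K, ahWeight K l Δ t k = Real.exp (-η * cumLoss K l t k) / Zt := by
      intro k; unfold ahWeight; rw [if_pos hΔ]
    have hterm : ∀ k : Fin K, -η * cumLoss K l t k + -η * l t k =
        -η * cumLoss K l (t+1) k := by
      intro k; rw [cumLoss_succ]; ring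
    have hsum : (∑ k : Fin K, ahWeight K l Δ t k * Real.exp (-η * l t k)) = Zt1 / Zt := by
      calc ∑ k : Fin K, ahWeight K l Δ t k * Real.exp (-η * l t k)
          = ∑ k : Fin K, Real.exp (-η * cumLoss K l (t+1) k) / Zt :=
            Finset.sum_congr rfl (fun k _ => by
              rw [hw k, div_mul_eq_mul_div, ← Real.exp_add, hterm k])
        _ = Zt1 / Zt := by rw [← Finset.sum_div]
    rw [hsum, Real.log_div (ne_of_gt hZt1pos) (ne_of_gt hZtpos),
      Real.log_mul (by positivity) (ne_of_gt hZt1pos),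
      Real.log_mul (by positivity) (ne_of_gt hZtpos)]
    ring
  · ring

lemma Phi_le_inf_add (hK : 2 ≤ K) {Δ : ℝ} (hΔ : 0 ≤ Δ) (t : ℕ) :
    Phi K l Δ t ≤ (⨅ k, cumLoss K l t k) + Δ := by
  haveI : NeZero K := neZero_of_two_le hK
  have hc : 0 < Real.log K := log_K_pos hK
  have hKpos : (0:ℝ) < (K:ℝ) := by exact_mod_cast Nat.pos_of_ne_zero (by omega)
  unfold Phi
  split
  · rename_i hΔp
    set η : ℝ := Real.log K / Δ with hη
    have hηpos : 0 < η := div_pos hc hΔp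
    obtain ⟨k0, hk0⟩ := exists_eq_ciInf_of_finite (f := fun j => cumLoss K l t j)
    set A : ℝ := (K:ℝ)⁻¹ * ∑ k : Fin K, Real.exp (-η * cumLoss K l t k) with hA
    have hApos : 0 < A := by positivity
    have h1 : (K:ℝ)⁻¹ * Real.exp (-η * cumLoss K l t k0) ≤ A := by
      rw [hA]
      apply mul_le_mul_of_nonneg_left _ (by positivity)
      exact Finset.single_le_sum (f := fun j : Fin K => Real.exp (-η * cumLoss K l t j))
        (fun j _ => (Real.exp_pos _).le) (Finset.mem_univ k0)
    have hlog : -Real.log K + (-η * ⨅ j, cumLoss K l t j) ≤ Real.log A := by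
      rw [Real.le_log_iff_exp_le hApos, Real.exp_add]
      calc Real.exp (-Real.log K) * Real.exp (-η * ⨅ j, cumLoss K l t j)
          = (K:ℝ)⁻¹ * Real.exp (-η * cumLoss K l t k0) := by
            rw [Real.exp_neg, Real.exp_log hKpos, hk0]
        _ ≤ A := h1
    have h2 : -(Δ / Real.log K) * Real.log A ≤
        -(Δ / Real.log K) * (-Real.log K + (-η * ⨅ j, cumLoss K l t j)) :=
      mul_le_mul_of_nonpos_left hlog (neg_nonpos.mpr (by positivity))
    have h3 : -(Δ / Real.log K) * (-Real.log K + (-η * ⨅ j, cumLoss K l t j)) =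
        (⨅ j, cumLoss K l t j) + Δ := by
      rw [hη]; field_simp; ring
    linarith
  · linarith

lemma Phi_mono (hK : 2 ≤ K) {Δ Δ' : ℝ} (h0 : 0 ≤ Δ) (h : Δ ≤ Δ') (t : ℕ) :
    Phi K l Δ t ≤ Phi K l Δ' t := by
  haveI : NeZero K := neZero_of_two_le hK
  have hc : 0 < Real.log K := log_K_pos hK
  have hKpos : (0:ℝ) < (K:ℝ) := by exact_mod_cast Nat.pos_of_ne_zero (by omega)
  rcases eq_or_lt_of_le h with rfl | hlt
  · exact le_refl _
  rcases eq_or_lt_of_le h0 with rfl | hΔp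
  · -- Δ = 0 < Δ'
    have hΔ'p : 0 < Δ' := hlt
    rw [Phi, Phi, if_neg (lt_irrefl 0), if_pos hΔ'p]
    set η : ℝ := Real.log K / Δ' with hη
    have hηpos : 0 < η := div_pos hc hΔ'p
    set A : ℝ := (K:ℝ)⁻¹ * ∑ k : Fin K, Real.exp (-η * cumLoss K l t k) with hA
    have hApos : 0 < A := by positivity
    have hle : A ≤ Real.exp (-η * ⨅ j, cumLoss K l t j) := by
      rw [hA]
      have : ∑ k : Fin K, Real.exp (-η * cumLoss K l t k) ≤
          ∑ _k : Fin K, Real.exp (-η * ⨅ j, cumLoss K l t j) := by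
        apply Finset.sum_le_sum
        intro k _
        apply Real.exp_le_exp.mpr
        have := finInf_le (fun j => cumLoss K l t j) k
        nlinarith
      rw [Finset.sum_const, Finset.card_univ, Fintype.card_fin, nsmul_eq_mul] at this
      calc (K:ℝ)⁻¹ * ∑ k : Fin K, Real.exp (-η * cumLoss K l t k)
          ≤ (K:ℝ)⁻¹ * ((K:ℝ) * Real.exp (-η * ⨅ j, cumLoss K l t j)) :=
            mul_le_mul_of_nonneg_left this (by positivity)
        _ = Real.exp (-η * ⨅ j, cumLoss K l t j) := by field_simp
    have hlog : Real.log A ≤ -η * ⨅ j, cumLoss K l t j :=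
      (Real.log_le_iff_le_exp hApos).mpr hle
    have h2 : -(Δ' / Real.log K) * (-η * ⨅ j, cumLoss K l t j) ≤
        -(Δ' / Real.log K) * Real.log A :=
      mul_le_mul_of_nonpos_left hlog (neg_nonpos.mpr (by positivity))
    have h3 : -(Δ' / Real.log K) * (-η * ⨅ j, cumLoss K l t j) = ⨅ j, cumLoss K l t j := by
      rw [hη]; field_simp
    linarith
  · -- 0 < Δ < Δ'
    have hΔ'p : 0 < Δ' := lt_trans hΔp hlt
    rw [Phi, Phi, if_pos hΔp, if_pos hΔ'p]
    have hΔne : Δ ≠ 0 := ne_of_gt hΔp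
    have hΔ'ne : Δ' ≠ 0 := ne_of_gt (lt_trans hΔp hlt)
    set p : ℝ := Δ' / Δ with hp
    have hp1 : 1 ≤ p := (one_le_div hΔp).mpr h
    set z : Fin K → ℝ := fun k => Real.exp (-(Real.log K / Δ') * cumLoss K l t k) with hz
    have hzpos : ∀ k, 0 < z k := fun k => Real.exp_pos _
    set A' : ℝ := (K:ℝ)⁻¹ * ∑ k, z k with hA'
    have hA'pos : 0 < A' := by positivity
    have hpow : ∀ k : Fin K, Real.exp (-(Real.log K / Δ) * cumLoss K l t k) = z k ^ p := by
      intro k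
      rw [hz, Real.rpow_def_of_pos (Real.exp_pos _), Real.log_exp]
      congr 1
      rw [hp]
      field_simp
    set A : ℝ := (K:ℝ)⁻¹ * ∑ k : Fin K, Real.exp (-(Real.log K / Δ) * cumLoss K l t k)
      with hA
    have hApos : 0 < A := by positivity
    have hJ : A' ^ p ≤ A := by
      have hJen : (∑ k : Fin K, ((K:ℝ)⁻¹) • z k) ^ p ≤ ∑ k : Fin K, ((K:ℝ)⁻¹) • (z k ^ p) :=
        (convexOn_rpow hp1).map_sum_le (fun k _ => by positivity)
          (by rw [Finset.sum_const, Finset.card_univ, Fintype.card_fin, nsmul_eq_mul]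
              field_simp)
          (fun k _ => Set.mem_Ici.mpr (hzpos k).le)
      have e1 : (∑ k : Fin K, ((K:ℝ)⁻¹) • z k) = A' := by
        rw [hA', Finset.mul_sum]; exact Finset.sum_congr rfl fun k _ => by rw [smul_eq_mul]
      have e2 : (∑ k : Fin K, ((K:ℝ)⁻¹) • (z k ^ p)) = A := by
        rw [hA, Finset.mul_sum]
        exact Finset.sum_congr rfl fun k _ => by rw [smul_eq_mul, hpow k]
      rw [e1, e2] at hJen
      exact hJen
    have hlog : p * Real.log A' ≤ Real.log A := by
      rw [← Real.log_rpow hA'pos]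
      exact (Real.log_le_log_iff (Real.rpow_pos_of_pos hA'pos p) hApos).mpr hJ
    have h2 : -(Δ / Real.log K) * Real.log A ≤ -(Δ / Real.log K) * (p * Real.log A') :=
      mul_le_mul_of_nonpos_left hlog (neg_nonpos.mpr (by positivity))
    have h3 : -(Δ / Real.log K) * (p * Real.log A') = -(Δ' / Real.log K) * Real.log A' := by
      rw [hp]; field_simp
    linarith

lemma mixSum_le (hK : 2 ≤ K) (T : ℕ) :
    ∑ t ∈ Finset.range T, ahMixLoss K l (ahDelta K l t) t ≤
      Phi K l (ahDelta K l T) T := by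
  induction T with
  | zero => rw [Finset.sum_range_zero, Phi_zero l hK]
  | succ T ih =>
    rw [Finset.sum_range_succ]
    have h1 : ahMixLoss K l (ahDelta K l T) T =
        Phi K l (ahDelta K l T) (T+1) - Phi K l (ahDelta K l T) T :=
      mix_eq_phi l hK _ T
    have h2 : Phi K l (ahDelta K l T) (T+1) ≤ Phi K l (ahDelta K l (T+1)) (T+1) :=
      Phi_mono l hK (ahDelta_nonneg l hK T) (ahDelta_le_succ l hK T) (T+1)
    linarith

lemma mixSum_le_inf_add (hK : 2 ≤ K) (T : ℕ) :
    ∑ t ∈ Finset.range T, ahMixLoss K l (ahDelta K l t) t ≤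
      (⨅ k, cumLoss K l T k) + ahDelta K l T :=
  le_trans (mixSum_le l hK T) (Phi_le_inf_add l hK (ahDelta_nonneg l hK T) T)

end Phi
section Calc

lemma one_sub_mul_exp_le (x : ℝ) : (1 - x) * Real.exp x ≤ 1 := by
  have h := Real.add_one_le_exp (-x)
  have hpos := Real.exp_pos x
  have := mul_le_mul_of_nonneg_right h hpos.le
  rw [← Real.exp_add] at this
  simp at this
  nlinarith

lemma u_hasDeriv (x : ℝ) :
    HasDerivAt (fun x : ℝ => (x - 2) * Real.exp x + (x + 2)) ((x - 1) * Real.exp x + 1) x := by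
  have h1 : HasDerivAt (fun x : ℝ => (x - 2) * Real.exp x)
      (1 * Real.exp x + (x - 2) * Real.exp x) x :=
    ((hasDerivAt_id x).sub_const 2).mul (Real.hasDerivAt_exp x)
  have h2 : HasDerivAt (fun x : ℝ => x + 2) 1 x := (hasDerivAt_id x).add_const 2
  have := h1.add h2
  exact this.congr_deriv (by ring)

lemma u_nonneg {x : ℝ} (hx : 0 ≤ x) : 0 ≤ (x - 2) * Real.exp x + (x + 2) := by
  set u : ℝ → ℝ := fun x => (x - 2) * Real.exp x + (x + 2) with hu
  have hmono : MonotoneOn u (Set.Ici 0) := by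
    apply monotoneOn_of_deriv_nonneg (convex_Ici 0)
    · exact HasDerivAt.continuousOn (fun x _ => u_hasDeriv x)
    · intro y _
      exact (u_hasDeriv y).differentiableAt.differentiableWithinAt
    · intro y _
      rw [(u_hasDeriv y).deriv]
      nlinarith [one_sub_mul_exp_le y]
  have h0 : u 0 = 0 := by simp [hu]
  have := hmono (Set.self_mem_Ici) (Set.mem_Ici.mpr hx) hx
  rw [h0] at this
  exact this

lemma exp_sub_sub_one_nonneg (x : ℝ) : 0 ≤ Real.exp x - x - 1 := by
  have := Real.add_one_le_exp x; linarith

lemma psi_mono {y b : ℝ} (hy : 0 ≤ y) (hyb : y ≤ b) :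
    (Real.exp y - y - 1) * b^2 ≤ (Real.exp b - b - 1) * y^2 := by
  rcases eq_or_lt_of_le hy with rfl | hy0
  · simp
  have hb0 : 0 < b := lt_of_lt_of_le hy0 hyb
  set F : ℝ → ℝ := fun x => (Real.exp x - x - 1) / x^2 with hF
  have hder : ∀ x : ℝ, x ≠ 0 → HasDerivAt F
      (((Real.exp x - 1) * x^2 - (Real.exp x - x - 1) * (2*x)) / (x^2)^2) x := by
    intro x hx
    have h1 : HasDerivAt (fun x : ℝ => Real.exp x - x - 1) (Real.exp x - 1) x := by
      have := ((Real.hasDerivAt_exp x).sub (hasDerivAt_id x)).sub_const 1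
      exact this
    have h2 : HasDerivAt (fun x : ℝ => x^2) (2*x) x := by
      have := hasDerivAt_pow 2 x
      exact this.congr_deriv (by norm_num)
    exact h1.div h2 (pow_ne_zero 2 hx)
  have hmono : MonotoneOn F (Set.Ioi 0) := by
    apply monotoneOn_of_deriv_nonneg (convex_Ioi 0)
    · apply ContinuousOn.div
      · exact Continuous.continuousOn (by continuity)
      · exact Continuous.continuousOn (by continuity)
      · intro x hx
        exact pow_ne_zero 2 (ne_of_gt (Set.mem_Ioi.mp hx))
    · intro x hx
      rw [interior_Ioi] at hx
      exact (hder x (ne_of_gt (Set.mem_Ioi.mp hx))).differentiableAt.differentiableWithinAt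
    · intro x hx
      rw [interior_Ioi] at hx
      have hxp : 0 < x := Set.mem_Ioi.mp hx
      rw [(hder x (ne_of_gt hxp)).deriv]
      apply div_nonneg _ (by positivity)
      nlinarith [mul_nonneg hxp.le (u_nonneg hxp.le)]
  have := hmono (Set.mem_Ioi.mpr hy0) (Set.mem_Ioi.mpr hb0) hyb
  rw [hF] at this
  simp only [] at this
  rw [div_le_div_iff₀ (by positivity) (by positivity)] at this
  exact this

lemma exp_le_quad_of_nonpos {y : ℝ} (hy : y ≤ 0) : Real.exp y ≤ 1 + y + y^2/2 := by
  set f : ℝ → ℝ := fun y => 1 + y + y^2/2 - Real.exp y with hf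
  have hder : ∀ x : ℝ, HasDerivAt f (1 + x - Real.exp x) x := by
    intro x
    have h1 : HasDerivAt (fun y : ℝ => 1 + y + y^2/2) (1 + x) x := by
      have h2 : HasDerivAt (fun y : ℝ => y^2/2) x x := by
        have := (hasDerivAt_pow 2 x).div_const 2
        exact this.congr_deriv (by norm_num)
      have := ((hasDerivAt_id x).const_add 1).add h2
      exact this
    have := h1.sub (Real.hasDerivAt_exp x)
    exact this
  have hanti : AntitoneOn f (Set.Iic 0) := by
    apply antitoneOn_of_deriv_nonpos (convex_Iic 0)
    · exact HasDerivAt.continuousOn (fun x _ => hder x)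
    · intro x _
      exact (hder x).differentiableAt.differentiableWithinAt
    · intro x _
      rw [(hder x).deriv]
      have := Real.add_one_le_exp x
      linarith
  have := hanti (Set.mem_Iic.mpr hy) (Set.mem_Iic.mpr (le_refl 0)) hy
  have hf0 : f 0 = 0 := by simp [hf]
  rw [hf0] at this
  rw [hf] at this
  simp only [] at this
  linarith

lemma exp_le_one_add_add {y b : ℝ} (hb : 0 < b) (hy : y ≤ b) :
    Real.exp y ≤ 1 + y + (Real.exp b - b - 1)/b^2 * y^2 := by
  have hpsi_half : 1/2 ≤ (Real.exp b - b - 1)/b^2 := by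
    rw [le_div_iff₀ (by positivity)]
    have := Real.quadratic_le_exp_of_nonneg hb.le
    nlinarith
  rcases le_or_gt y 0 with hy0 | hy0
  · have h1 := exp_le_quad_of_nonpos hy0
    nlinarith [sq_nonneg y]
  · have h2 := psi_mono hy0.le hy
    have h3 : Real.exp y - y - 1 ≤ (Real.exp b - b - 1)/b^2 * y^2 := by
      rw [div_mul_eq_mul_div, le_div_iff₀ (by positivity)]
      nlinarith
    linarith

lemma key_ineq {x : ℝ} (hx : 0 ≤ x) :
    (2 - 2/3*x) * (Real.exp x - x - 1) ≤ x^2 := by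
  set p : ℝ → ℝ := fun x => x^2 - (2 - 2/3*x) * (Real.exp x - x - 1) with hp
  have hder : ∀ x : ℝ, HasDerivAt p
      (2*x - ((-(2/3)) * (Real.exp x - x - 1) + (2 - 2/3*x) * (Real.exp x - 1))) x := by
    intro x
    have h1 : HasDerivAt (fun x : ℝ => x^2) (2*x) x := by
      have := hasDerivAt_pow 2 x
      exact this.congr_deriv (by norm_num)
    have h2 : HasDerivAt (fun x : ℝ => 2 - 2/3*x) (-(2/3)) x := by
      have := ((hasDerivAt_id x).const_mul (2/3 : ℝ)).const_sub 2
      exact this.congr_deriv (by ring)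
    have h3 : HasDerivAt (fun x : ℝ => Real.exp x - x - 1) (Real.exp x - 1) x := by
      have := ((Real.hasDerivAt_exp x).sub (hasDerivAt_id x)).sub_const 1
      exact this
    exact h1.sub (h2.mul h3)
  have hder' : ∀ x : ℝ, HasDerivAt (fun x => deriv p x)
      ((2/3) * (1 + (x - 1) * Real.exp x)) x := by
    intro x
    have heq : (fun x => deriv p x) = fun x =>
        2*x - ((-(2/3)) * (Real.exp x - x - 1) + (2 - 2/3*x) * (Real.exp x - 1)) := by
      funext y
      exact (hder y).deriv
    rw [heq]
    have h1 : HasDerivAt (fun x : ℝ => 2*x) 2 x := by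
      simpa using (hasDerivAt_id x).const_mul (2:ℝ)
    have h2 : HasDerivAt (fun x : ℝ => (-(2/3 : ℝ)) * (Real.exp x - x - 1))
        ((-(2/3)) * (Real.exp x - 1)) x := by
      have h3 : HasDerivAt (fun x : ℝ => Real.exp x - x - 1) (Real.exp x - 1) x := by
        have := ((Real.hasDerivAt_exp x).sub (hasDerivAt_id x)).sub_const 1
        exact this
      exact h3.const_mul _
    have h4 : HasDerivAt (fun x : ℝ => (2 - 2/3*x) * (Real.exp x - 1))
        ((-(2/3)) * (Real.exp x - 1) + (2 - 2/3*x) * Real.exp x) x := by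
      have h5 : HasDerivAt (fun x : ℝ => 2 - 2/3*x) (-(2/3)) x := by
        have := ((hasDerivAt_id x).const_mul (2/3 : ℝ)).const_sub 2
        exact this.congr_deriv (by ring)
      have h6 : HasDerivAt (fun x : ℝ => Real.exp x - 1) (Real.exp x) x :=
        (Real.hasDerivAt_exp x).sub_const 1
      exact h5.mul h6
    have := h1.sub (h2.add h4)
    exact this.congr_deriv (by ring)
  have hderiv_mono : MonotoneOn (fun x => deriv p x) (Set.Ici 0) := by
    apply monotoneOn_of_deriv_nonneg (convex_Ici 0)
    · exact HasDerivAt.continuousOn (fun x _ => hder' x)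
    · intro x _
      exact (hder' x).differentiableAt.differentiableWithinAt
    · intro x hx
      rw [interior_Ici] at hx
      rw [(hder' x).deriv]
      nlinarith [one_sub_mul_exp_le x]
  have hd0 : deriv p 0 = 0 := by
    rw [(hder 0).deriv]
    simp [Real.exp_zero]
  have hderiv_nonneg : ∀ x ∈ Set.Ici (0:ℝ), 0 ≤ deriv p x := by
    intro x hx
    have := hderiv_mono Set.self_mem_Ici hx (Set.mem_Ici.mp hx)
    simpa [hd0] using this
  have hmono : MonotoneOn p (Set.Ici 0) := by
    apply monotoneOn_of_deriv_nonneg (convex_Ici 0)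
    · exact HasDerivAt.continuousOn (fun x _ => hder x)
    · intro x _
      exact (hder x).differentiableAt.differentiableWithinAt
    · intro x hx
      rw [interior_Ici] at hx
      exact hderiv_nonneg x (Set.mem_Ici.mpr (Set.mem_Ioi.mp hx).le)
  have hp0 : p 0 = 0 := by simp [hp, Real.exp_zero]
  have := hmono Set.self_mem_Ici (Set.mem_Ici.mpr hx) hx
  rw [hp0] at this
  rw [hp] at this
  simp only [] at this
  linarith

end Calc
section Bernstein
variable {K : ℕ} (l : ℕ → Fin K → ℝ)

lemma round_bernstein (hK : 2 ≤ K) {Δ : ℝ} (hΔ : 0 < Δ) (t : ℕ) :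
    2 * (ahHedgeLoss K l Δ t - ahMixLoss K l Δ t) ≤
      (Real.log K / Δ) *
        ((∑ k, ahWeight K l Δ t k * (l t k - ahHedgeLoss K l Δ t)^2) +
          2/3 * ((⨆ k, l t k) - ⨅ k, l t k) *
            (ahHedgeLoss K l Δ t - ahMixLoss K l Δ t)) := by
  haveI : NeZero K := neZero_of_two_le hK
  have hc : 0 < Real.log K := log_K_pos hK
  set η : ℝ := Real.log K / Δ with hη
  have hηpos : 0 < η := div_pos hc hΔ
  set w : Fin K → ℝ := ahWeight K l Δ t with hwdef
  have hw0 : ∀ k, 0 ≤ w k := ahWeight_nonneg l Δ t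
  have hw1 : ∑ k, w k = 1 := ahWeight_sum_one l Δ t
  set h : ℝ := ahHedgeLoss K l Δ t with hhdef
  set m : ℝ := ahMixLoss K l Δ t with hmdef
  set δ : ℝ := h - m with hδdef
  have hδ0 : 0 ≤ δ := gap_nonneg l hK Δ t
  set s : ℝ := (⨆ k, l t k) - ⨅ k, l t k with hsdef
  set v : ℝ := ∑ k, w k * (l t k - h)^2 with hvdef
  have hv0 : 0 ≤ v :=
    Finset.sum_nonneg fun k _ => mul_nonneg (hw0 k) (sq_nonneg _)
  have hδs : δ ≤ s := gap_le l hK Δ t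
  have hs0 : 0 ≤ s := le_trans hδ0 hδs
  show 2 * δ ≤ η * (v + 2/3 * s * δ)
  rcases eq_or_lt_of_le hs0 with hseq | hspos
  · -- s = 0 : δ = 0
    have hδeq : δ = 0 := le_antisymm (hseq ▸ hδs) hδ0
    rw [hδeq, ← hseq]
    simp [hv0, mul_nonneg hηpos.le hv0]
  -- main case
  set b : ℝ := η * s with hbdef
  have hb : 0 < b := mul_pos hηpos hspos
  set ψ : ℝ := (Real.exp b - b - 1)/b^2 with hψdef
  have hψpos : 0 < ψ := by
    have := Real.add_one_lt_exp (ne_of_gt hb)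
    apply div_pos (by linarith) (by positivity)
  -- Bernstein: Z' ≤ 1 + ψ η² v
  set Z' : ℝ := ∑ k, w k * Real.exp (η * (h - l t k)) with hZ'def
  have hYle : ∀ k, η * (h - l t k) ≤ b := by
    intro k
    rw [hbdef]
    apply mul_le_mul_of_nonneg_left _ hηpos.le
    have h1 : h ≤ ⨆ j, l t j := hedge_le_sup l Δ t
    have h2 : (⨅ j, l t j) ≤ l t k := finInf_le _ k
    rw [hsdef]; linarith
  have hZ'le : Z' ≤ 1 + ψ * η^2 * v := by
    have hpt : ∀ k, w k * Real.exp (η * (h - l t k)) ≤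
        w k * (1 + η * (h - l t k) + ψ * (η * (h - l t k))^2) := by
      intro k
      apply mul_le_mul_of_nonneg_left _ (hw0 k)
      have := exp_le_one_add_add hb (hYle k)
      rw [hψdef]
      linarith [this]
    have hsum := Finset.sum_le_sum (fun k (_ : k ∈ Finset.univ) => hpt k)
    have hexpand : ∑ k, w k * (1 + η * (h - l t k) + ψ * (η * (h - l t k))^2) =
        1 + ψ * η^2 * v := by
      have e1 : ∀ k : Fin K, w k * (1 + η * (h - l t k) + ψ * (η * (h - l t k))^2) =
          w k + (η*h*(w k) - η*(w k * l t k)) + ψ*η^2*(w k * (l t k - h)^2) := by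
        intro k; ring
      rw [Finset.sum_congr rfl (fun k _ => e1 k)]
      rw [Finset.sum_add_distrib, Finset.sum_add_distrib, Finset.sum_sub_distrib,
        ← Finset.mul_sum, ← Finset.mul_sum, ← Finset.mul_sum, hw1]
      have hh : ∑ k, w k * l t k = h := rfl
      rw [hh, ← hvdef]
      ring
    calc Z' ≤ ∑ k, w k * (1 + η * (h - l t k) + ψ * (η * (h - l t k))^2) := hsum
      _ = 1 + ψ * η^2 * v := hexpand
  have hZ'pos : 0 < Z' :=
    Finset.sum_pos (fun k _ => mul_pos (ahWeight_pos_of_pos l hΔ t k) (Real.exp_pos _))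
      univ_nonempty
  -- δ = (1/η) log Z'
  have hmval : m = -(Δ / Real.log K) *
      Real.log (∑ k, w k * Real.exp (-η * l t k)) := by
    rw [hmdef]
    unfold ahMixLoss
    rw [if_pos hΔ, ← hη, ← hwdef]
  have hZ'eq : Z' = Real.exp (η * h) * ∑ k, w k * Real.exp (-η * l t k) := by
    rw [hZ'def, Finset.mul_sum]
    apply Finset.sum_congr rfl
    intro k _
    rw [← mul_assoc, mul_comm (Real.exp (η*h)) (w k), mul_assoc, ← Real.exp_add]
    congr 2
    ring
  have hZpos : 0 < ∑ k, w k * Real.exp (-η * l t k) := mixZ_pos l hΔ t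
  have hlogZ' : Real.log Z' = η * δ := by
    rw [hZ'eq, Real.log_mul (ne_of_gt (Real.exp_pos _)) (ne_of_gt hZpos), Real.log_exp,
      hδdef, hmval]
    have hinv : -(Δ / Real.log K) = -(1/η) := by
      rw [hη]; field_simp
    rw [hinv]
    field_simp
    ring
  have hηδ : η * δ ≤ ψ * η^2 * v := by
    have h1 : Real.log Z' ≤ Z' - 1 := Real.log_le_sub_one_of_pos hZ'pos
    rw [hlogZ'] at h1
    linarith
  -- key inequality
  have hkey : 2 - 1/ψ ≤ 2/3 * b := by
    rcases le_or_gt (2 - 2/3*b) 0 with hcase | hcase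
    · have : 0 < 1/ψ := by positivity
      linarith
    · have hk := key_ineq hb.le
      have hepos : 0 < Real.exp b - b - 1 := by
        have := Real.add_one_lt_exp (ne_of_gt hb); linarith
      have h1ψ : 1/ψ = b^2 / (Real.exp b - b - 1) := by
        rw [hψdef]; field_simp
      rw [h1ψ]
      have h6 : 2 - 2/3*b ≤ b^2/(Real.exp b - b - 1) := by
        rw [le_div_iff₀ hepos]; nlinarith
      linarith
  have h2 : δ ≤ ψ * η * v := by
    have e : ψ * η^2 * v = η * (ψ * η * v) := by ring
    rw [e] at hηδ
    exact le_of_mul_le_mul_left hηδ hηpos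
  have h3 : δ / ψ ≤ η * v := by
    rw [div_le_iff₀ hψpos]
    nlinarith
  have h4 : (2 - 1/ψ) * δ ≤ (2/3 * b) * δ := mul_le_mul_of_nonneg_right hkey hδ0
  have h5 : (2 - 1/ψ) * δ = 2*δ - δ/ψ := by ring
  have hmain : 2 * δ ≤ η * v + 2/3 * (η * s) * δ := by
    rw [h5] at h4
    rw [← hbdef]
    linarith
  calc 2 * δ ≤ η * v + 2/3 * (η * s) * δ := hmain
    _ = η * (v + 2/3 * s * δ) := by ring

end Bernstein
section Master
variable {K : ℕ} (l : ℕ → Fin K → ℝ)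

lemma per_round_sq (hK : 2 ≤ K) (t : ℕ) (S : ℝ)
    (hsS : (⨆ k, l t k) - (⨅ k, l t k) ≤ S) :
    (ahDelta K l (t+1))^2 ≤ (ahDelta K l t)^2 +
      Real.log K * (∑ k, ahWeight K l (ahDelta K l t) t k *
        (l t k - ahHedgeLoss K l (ahDelta K l t) t)^2) +
      (2/3 * Real.log K + 1) * S *
        (ahHedgeLoss K l (ahDelta K l t) t - ahMixLoss K l (ahDelta K l t) t) := by
  have hc : 0 < Real.log K := log_K_pos hK
  haveI : NeZero K := neZero_of_two_le hK
  set Δ : ℝ := ahDelta K l t with hΔdef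
  set δ : ℝ := ahHedgeLoss K l Δ t - ahMixLoss K l Δ t with hδdef
  set v : ℝ := ∑ k, ahWeight K l Δ t k * (l t k - ahHedgeLoss K l Δ t)^2 with hvdef
  set s : ℝ := (⨆ k, l t k) - (⨅ k, l t k) with hsdef
  have hδ0 : 0 ≤ δ := gap_nonneg l hK Δ t
  have hδs : δ ≤ s := gap_le l hK Δ t
  have hv0 : 0 ≤ v := Finset.sum_nonneg fun k _ =>
    mul_nonneg (ahWeight_nonneg l Δ t k) (sq_nonneg _)
  have hsucc : ahDelta K l (t+1) = Δ + δ := ahDelta_succ l t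
  have hδsq : δ^2 ≤ S * δ := by
    have : δ*δ ≤ S*δ := mul_le_mul_of_nonneg_right (le_trans hδs hsS) hδ0
    nlinarith
  have hΔ0 : 0 ≤ Δ := ahDelta_nonneg l hK t
  have hcross : 2*Δ*δ ≤ Real.log K * v + 2/3 * Real.log K * S * δ := by
    rcases eq_or_lt_of_le hΔ0 with heq | hpos
    · rw [← heq]
      have : 0 ≤ 2/3 * Real.log K * S * δ := by
        have hS0 : 0 ≤ S := le_trans (le_trans hδ0 hδs) hsS
        positivity
      nlinarith [mul_nonneg hc.le hv0]
    · have hb := round_bernstein l hK hpos t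
      rw [← hδdef, ← hvdef, ← hsdef] at hb
      have h2 : Δ * (2 * δ) ≤ Δ * ((Real.log K / Δ) * (v + 2/3 * s * δ)) :=
        mul_le_mul_of_nonneg_left hb hΔ0
      have h3 : Δ * ((Real.log K / Δ) * (v + 2/3 * s * δ)) =
          Real.log K * v + 2/3 * Real.log K * (s * δ) := by
        field_simp
      have h4 : 2/3 * Real.log K * (s*δ) ≤ 2/3 * Real.log K * (S*δ) := by
        apply mul_le_mul_of_nonneg_left _ (by positivity)
        exact mul_le_mul_of_nonneg_right hsS hδ0
      nlinarith [h2, h3, h4]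
  rw [hsucc]
  nlinarith [hcross, hδsq]

lemma sum_gap_eq (T : ℕ) :
    ∑ t ∈ Finset.range T, (ahHedgeLoss K l (ahDelta K l t) t -
      ahMixLoss K l (ahDelta K l t) t) = ahDelta K l T := by
  induction T with
  | zero => simp [ahDelta]
  | succ T ih => rw [Finset.sum_range_succ, ih, ← ahDelta_succ]

lemma delta_sq_le (hK : 2 ≤ K) (T : ℕ) (S : ℝ)
    (hsS : ∀ t ∈ Finset.range T, (⨆ k, l t k) - (⨅ k, l t k) ≤ S) :
    (ahDelta K l T)^2 ≤
      Real.log K * (∑ t ∈ Finset.range T, ∑ k, ahWeight K l (ahDelta K l t) t k *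
        (l t k - ahHedgeLoss K l (ahDelta K l t) t)^2) +
      (2/3 * Real.log K + 1) * S * ahDelta K l T := by
  induction T with
  | zero => simp [ahDelta]
  | succ T ih =>
    have hsS' : ∀ t ∈ Finset.range T, (⨆ k, l t k) - (⨅ k, l t k) ≤ S := by
      intro t ht
      exact hsS t (Finset.mem_range.mpr (Nat.lt_succ_of_lt (Finset.mem_range.mp ht)))
    have h1 := per_round_sq l hK T S (hsS T (Finset.mem_range.mpr (Nat.lt_succ_self T)))
    have h2 := ih hsS'
    rw [Finset.sum_range_succ (f := fun t => ∑ k, ahWeight K l (ahDelta K l t) t k *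
        (l t k - ahHedgeLoss K l (ahDelta K l t) t)^2)]
    have h3 : ahDelta K l (T+1) = ahDelta K l T +
        (ahHedgeLoss K l (ahDelta K l T) T - ahMixLoss K l (ahDelta K l T) T) :=
      ahDelta_succ l T
    rw [h3] at h1 ⊢
    linarith [h1, h2]

lemma variance_le (hK : 2 ≤ K) (Δ : ℝ) (t : ℕ) :
    ∑ k, ahWeight K l Δ t k * (l t k - ahHedgeLoss K l Δ t)^2 ≤
      ((⨆ k, l t k) - ahHedgeLoss K l Δ t) * (ahHedgeLoss K l Δ t - ⨅ k, l t k) := by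
  haveI : NeZero K := neZero_of_two_le hK
  set w : Fin K → ℝ := ahWeight K l Δ t with hwdef
  have hw0 : ∀ k, 0 ≤ w k := ahWeight_nonneg l Δ t
  have hw1 : ∑ k, w k = 1 := ahWeight_sum_one l Δ t
  set h : ℝ := ahHedgeLoss K l Δ t with hhdef
  have hh : ∑ k, w k * l t k = h := rfl
  set sup : ℝ := ⨆ k, l t k with hsup
  set inf : ℝ := ⨅ k, l t k with hinf
  have hsq : (∑ k, w k * (l t k - h)^2) = (∑ k, w k * (l t k)^2) - h^2 := by
    have e : ∀ k : Fin K, w k * (l t k - h)^2 =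
        w k * (l t k)^2 - 2*h*(w k * l t k) + h^2 * w k := fun k => by ring
    rw [Finset.sum_congr rfl (fun k _ => e k), Finset.sum_add_distrib,
      Finset.sum_sub_distrib, ← Finset.mul_sum, ← Finset.mul_sum, hh, hw1]
    ring
  have hpos : 0 ≤ ∑ k, w k * ((sup - l t k) * (l t k - inf)) := by
    apply Finset.sum_nonneg
    intro k _
    apply mul_nonneg (hw0 k)
    apply mul_nonneg
    · have := le_finSup (fun j => l t j) k; rw [← hsup] at this; linarith
    · have := finInf_le (fun j => l t j) k; rw [← hinf] at this; linarith
  have hexp : (∑ k, w k * ((sup - l t k) * (l t k - inf))) =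
      (sup + inf) * h - sup*inf - ∑ k, w k * (l t k)^2 := by
    have e : ∀ k : Fin K, w k * ((sup - l t k) * (l t k - inf)) =
        (sup + inf) * (w k * l t k) - sup*inf*(w k) - w k * (l t k)^2 := fun k => by ring
    rw [Finset.sum_congr rfl (fun k _ => e k), Finset.sum_sub_distrib,
      Finset.sum_sub_distrib, ← Finset.mul_sum, ← Finset.mul_sum, hh, hw1]
    ring
  rw [hsq]
  nlinarith [hpos, hexp]

lemma cs_q_bound (T : ℕ) (s a : ℕ → ℝ)
    (hs : ∀ t ∈ Finset.range T, 0 ≤ s t)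
    (ha : ∀ t ∈ Finset.range T, 0 ≤ a t)
    (has : ∀ t ∈ Finset.range T, a t ≤ s t)
    (hSig : 0 < ∑ t ∈ Finset.range T, s t) :
    ∑ t ∈ Finset.range T, (a t * (s t - a t) / s t) ≤
      (∑ t ∈ Finset.range T, a t) *
        ((∑ t ∈ Finset.range T, s t) - ∑ t ∈ Finset.range T, a t) /
        (∑ t ∈ Finset.range T, s t) := by
  have hid : ∀ t ∈ Finset.range T, a t * (s t - a t) / s t = a t - (a t)^2 / s t := by
    intro t ht
    by_cases h : s t = 0
    · have ha0 : a t = 0 := le_antisymm (h ▸ has t ht) (ha t ht)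
      simp [h, ha0]
    · field_simp
  have hcs : (∑ t ∈ Finset.range T, a t)^2 ≤
      (∑ t ∈ Finset.range T, s t) * (∑ t ∈ Finset.range T, (a t)^2 / s t) := by
    have h1 : ∀ t ∈ Finset.range T, a t = Real.sqrt (s t) * (a t / Real.sqrt (s t)) := by
      intro t ht
      by_cases h : s t = 0
      · have ha0 : a t = 0 := le_antisymm (h ▸ has t ht) (ha t ht)
        simp [h, ha0]
      · rw [mul_div_assoc']
        rw [mul_comm, mul_div_assoc]
        rw [div_self (Real.sqrt_ne_zero'.mpr (lt_of_le_of_ne (hs t ht) (Ne.symm h))), mul_one]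
    have h2 := Finset.sum_mul_sq_le_sq_mul_sq (Finset.range T)
      (fun t => Real.sqrt (s t)) (fun t => a t / Real.sqrt (s t))
    have h3 : ∑ t ∈ Finset.range T, Real.sqrt (s t) * (a t / Real.sqrt (s t)) =
        ∑ t ∈ Finset.range T, a t :=
      Finset.sum_congr rfl (fun t ht => (h1 t ht).symm)
    have h4 : ∑ t ∈ Finset.range T, Real.sqrt (s t)^2 = ∑ t ∈ Finset.range T, s t :=
      Finset.sum_congr rfl (fun t ht => Real.sq_sqrt (hs t ht))
    have h5 : ∑ t ∈ Finset.range T, (a t / Real.sqrt (s t))^2 =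
        ∑ t ∈ Finset.range T, (a t)^2 / s t := by
      apply Finset.sum_congr rfl
      intro t ht
      rw [div_pow, Real.sq_sqrt (hs t ht)]
    rw [h3, h4, h5] at h2
    exact h2
  rw [Finset.sum_congr rfl hid, Finset.sum_sub_distrib]
  have h6 : (∑ t ∈ Finset.range T, a t)^2 / (∑ t ∈ Finset.range T, s t) ≤
      ∑ t ∈ Finset.range T, (a t)^2 / s t := by
    rw [div_le_iff₀ hSig]
    nlinarith [hcs]
  have h7 : (∑ t ∈ Finset.range T, a t) *
      ((∑ t ∈ Finset.range T, s t) - ∑ t ∈ Finset.range T, a t) /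
      (∑ t ∈ Finset.range T, s t) =
      (∑ t ∈ Finset.range T, a t) -
        (∑ t ∈ Finset.range T, a t)^2 / (∑ t ∈ Finset.range T, s t) := by
    field_simp
  rw [h7]
  linarith

lemma quad_solve {D X d : ℝ} (hD : 0 ≤ D) (hX : 0 ≤ X) (hd : 0 ≤ d)
    (hq : D^2 ≤ X^2 + d*D) : D ≤ X + d := by
  by_contra hcon
  push_neg at hcon
  nlinarith

end Master
section MeasureLemma
open MeasureTheory

lemma majority_measure_le {K : ℕ} [NeZero K] (w : Fin K → ℝ) (hw0 : ∀ k, 0 ≤ w k)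
    (C : Fin K → Set ℝ) (hCm : ∀ k, MeasurableSet (C k))
    (hCf : ∀ k, volume (C k) ≠ ⊤) :
    (volume {y : ℝ | (1 : ℝ) / 2 < ∑ k, w k * (C k).indicator (1 : ℝ → ℝ) y}).toReal ≤
      2 * ∑ k, w k * (volume (C k)).toReal := by
  set g : ℝ → ℝ := fun y => ∑ k, w k * (C k).indicator (1 : ℝ → ℝ) y with hgdef
  have hg_meas : Measurable g := by
    apply Finset.measurable_sum
    intro k _
    exact (measurable_one.indicator (hCm k)).const_mul (w k)
  have hg_nonneg : ∀ y, 0 ≤ g y := by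
    intro y
    apply Finset.sum_nonneg
    intro k _
    exact mul_nonneg (hw0 k) (Set.indicator_nonneg (fun _ _ => zero_le_one) y)
  have hint_k : ∀ k : Fin K, Integrable ((C k).indicator (1 : ℝ → ℝ)) volume := by
    intro k
    rw [integrable_indicator_iff (hCm k)]
    exact integrableOn_const (hCf k)
  have hg_int : Integrable g volume := by
    apply integrable_finset_sum
    intro k _
    exact (hint_k k).const_mul (w k)
  have hg_integral : ∫ y, g y = ∑ k, w k * (volume (C k)).toReal := by
    rw [hgdef]
    rw [integral_finset_sum _ (fun k _ => (hint_k k).const_mul (w k))]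
    apply Finset.sum_congr rfl
    intro k _
    rw [MeasureTheory.integral_const_mul, integral_indicator_one (hCm k), measureReal_def]
  set A : Set ℝ := {y : ℝ | (1 : ℝ) / 2 < g y} with hAdef
  have hA_meas : MeasurableSet A := measurableSet_lt measurable_const hg_meas
  have hA_sub : A ⊆ ⋃ k, C k := by
    intro y hy
    by_contra hnot
    have : ∀ k : Fin K, (C k).indicator (1 : ℝ → ℝ) y = 0 := by
      intro k
      apply Set.indicator_of_notMem
      intro hmem
      exact hnot (Set.mem_iUnion.mpr ⟨k, hmem⟩)
    have hg0 : g y = 0 := by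
      rw [hgdef]
      simp only []
      rw [Finset.sum_congr rfl (fun k _ => by rw [this k, mul_zero])]
      exact Finset.sum_const_zero
    have hy' : (1:ℝ)/2 < g y := hy
    rw [hg0] at hy'
    norm_num at hy'
  have hA_fin : volume A ≠ ⊤ := by
    intro htop
    have h1 : volume A ≤ ∑ k : Fin K, volume (C k) :=
      le_trans (measure_mono hA_sub) (measure_iUnion_fintype_le volume C)
    rw [htop] at h1
    have h2 : (∑ k : Fin K, volume (C k)) < ⊤ :=
      ENNReal.sum_lt_top.mpr (fun k _ => lt_top_iff_ne_top.mpr (hCf k))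
    exact absurd (lt_of_le_of_lt h1 h2) (lt_irrefl _)
  have hhalf : (1:ℝ)/2 * (volume A).toReal ≤ ∫ y in A, g y := by
    rw [← measureReal_def]; apply setIntegral_ge_of_const_le_real hA_meas hA_fin
    · intro x hx
      exact le_of_lt (by exact hx)
    · exact hg_int.integrableOn
  have hfull : ∫ y in A, g y ≤ ∫ y, g y :=
    setIntegral_le_integral hg_int (Filter.Eventually.of_forall hg_nonneg)
  rw [← hg_integral]
  linarith

end MeasureLemma
/-- **Proposition 2** (total Lebesgue measure of AdaHedge-weighted majority vote
sets): running AdaHedge with the losses `ℓ_k^{(t)} = λ(C_k^{(t)})` given by the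
Lebesgue measures of the sets, the total Lebesgue measure `L_M^{(T)}` of the
weighted majority vote sets
`C^{(t)} = {y : ∑ k, w_k^{(t)}·1{y ∈ C_k^{(t)}} > 1/2}` satisfies
`L_M ≤ 2 L_* + 4·√(S·ln K·(L_+ − L_*)(L_* − L_−)/(L_+ − L_−)) + 2 S·((16/3)·ln K + 2)`
(the fraction being `0` when `L_+ = L_−`, as is Lean's division convention). -/
theorem adahedge_majority_vote_total_length_bound
    (K T : ℕ) (hK : 2 ≤ K) (hT : 1 ≤ T)
    (C : ℕ → Fin K → Set ℝ)
    (hCmeas : ∀ t k, MeasurableSet (C t k))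
    (hCfin : ∀ t k, MeasureTheory.volume (C t k) ≠ ⊤)
    (l : ℕ → Fin K → ℝ)
    (hl : ∀ t k, l t k = (MeasureTheory.volume (C t k)).toReal)
    (LM Lstar Lplus Lminus S : ℝ)
    (hLM : LM = ∑ t ∈ Finset.range T,
      (MeasureTheory.volume {y : ℝ | (1 : ℝ) / 2 <
        ∑ k, ahWeight K l (ahDelta K l t) t k * (C t k).indicator (1 : ℝ → ℝ) y}).toReal)
    (hLstar : Lstar = ⨅ k, cumLoss K l T k)
    (hLplus : Lplus = ∑ t ∈ Finset.range T, ⨆ k, l t k)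
    (hLminus : Lminus = ∑ t ∈ Finset.range T, ⨅ k, l t k)
    (hS : S = (Finset.range T).sup'
        (Finset.nonempty_range_iff.mpr (by omega))
        (fun t => (⨆ k, l t k) - ⨅ k, l t k)) :
    LM ≤ 2 * Lstar +
      4 * Real.sqrt (S * Real.log K *
        ((Lplus - Lstar) * (Lstar - Lminus) / (Lplus - Lminus))) +
      2 * S * (16 / 3 * Real.log K + 2) := by
  haveI : NeZero K := neZero_of_two_le hK
  have hc : 0 < Real.log K := log_K_pos hK
  -- abbreviations
  set H : ℝ := ∑ t ∈ Finset.range T, ahHedgeLoss K l (ahDelta K l t) t with hHdef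
  clear_value H
  set M : ℝ := ∑ t ∈ Finset.range T, ahMixLoss K l (ahDelta K l t) t with hMdef
  clear_value M
  set D : ℝ := ahDelta K l T with hDdef
  clear_value D
  have hD0 : 0 ≤ D := by rw [hDdef]; exact ahDelta_nonneg l hK T
  -- LM ≤ 2 H
  have hLM2H : LM ≤ 2 * H := by
    rw [hLM, hHdef, Finset.mul_sum]
    apply Finset.sum_le_sum
    intro t _
    have h1 := majority_measure_le (ahWeight K l (ahDelta K l t) t)
      (ahWeight_nonneg l (ahDelta K l t) t) (C t) (hCmeas t) (hCfin t)
    have h2 : ∑ k, ahWeight K l (ahDelta K l t) t k * (MeasureTheory.volume (C t k)).toReal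
        = ahHedgeLoss K l (ahDelta K l t) t := by
      unfold ahHedgeLoss
      exact Finset.sum_congr rfl (fun k _ => by rw [← hl t k])
    rw [h2] at h1
    exact h1
  -- H = M + D
  have hHM : H = M + D := by
    have := sum_gap_eq l T
    rw [Finset.sum_sub_distrib] at this
    rw [hHdef, hMdef, hDdef]
    linarith
  -- M ≤ Lstar + D
  have hMle : M ≤ Lstar + D := by
    rw [hMdef, hLstar, hDdef]
    exact mixSum_le_inf_add l hK T
  have hHle : H ≤ Lstar + 2 * D := by linarith
  -- basic positivity facts
  have hs_nonneg : ∀ t : ℕ, 0 ≤ (⨆ k, l t k) - ⨅ k, l t k := by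
    intro t
    have k0 : Fin K := ⟨0, by omega⟩
    have h1 := finInf_le (fun j => l t j) k0
    have h2 := le_finSup (fun j => l t j) k0
    linarith
  have hsS : ∀ t ∈ Finset.range T, (⨆ k, l t k) - (⨅ k, l t k) ≤ S := by
    intro t ht
    rw [hS]
    exact Finset.le_sup' (fun t => (⨆ k, l t k) - ⨅ k, l t k) ht
  have hS0 : 0 ≤ S := by
    have h0T : 0 ∈ Finset.range T := Finset.mem_range.mpr (by omega)
    exact le_trans (hs_nonneg 0) (hsS 0 h0T)
  -- Lminus ≤ Lstar ≤ Lplus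
  obtain ⟨k0, hk0⟩ := exists_eq_ciInf_of_finite (f := fun j => cumLoss K l T j)
  have hLstar_eq : Lstar = ∑ t ∈ Finset.range T, l t k0 := by
    rw [hLstar, ← hk0]
    rfl
  have hLms : Lminus ≤ Lstar := by
    rw [hLminus, hLstar_eq]
    exact Finset.sum_le_sum (fun t _ => finInf_le (fun j => l t j) k0)
  have hLsp : Lstar ≤ Lplus := by
    rw [hLplus, hLstar_eq]
    exact Finset.sum_le_sum (fun t _ => le_finSup (fun j => l t j) k0)
  -- nonnegativity of the target extra terms
  have hsqrt0 : 0 ≤ 4 * Real.sqrt (S * Real.log K *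
      ((Lplus - Lstar) * (Lstar - Lminus) / (Lplus - Lminus))) := by positivity
  have hlast0 : 0 ≤ 2 * S * (16 / 3 * Real.log K + 2) := by positivity
  -- case: H ≤ Lstar
  rcases le_or_gt H Lstar with hcase | hcase
  · linarith only [hLM2H, hcase, hsqrt0, hlast0]
  -- now Lstar < H
  have hsum_s : ∑ t ∈ Finset.range T, ((⨆ k, l t k) - ⨅ k, l t k) = Lplus - Lminus := by
    rw [Finset.sum_sub_distrib, hLplus, hLminus]
  rcases le_or_gt (Lplus - Lminus) 0 with hSig0 | hSigpos
  · -- degenerate: all s_t = 0, so D = 0 and H ≤ Lstar, contradiction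
    exfalso
    have hzero : ∀ t ∈ Finset.range T, ((⨆ k, l t k) - ⨅ k, l t k) = 0 := by
      have heq : ∑ t ∈ Finset.range T, ((⨆ k, l t k) - ⨅ k, l t k) = 0 :=
        le_antisymm (hsum_s ▸ hSig0)
          (Finset.sum_nonneg (fun t _ => hs_nonneg t))
      exact (Finset.sum_eq_zero_iff_of_nonneg (fun t _ => hs_nonneg t)).mp heq
    have hD_eq : D = 0 := by
      rw [hDdef, ← sum_gap_eq l T]
      apply Finset.sum_eq_zero
      intro t ht
      have h1 := gap_nonneg l hK (ahDelta K l t) t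
      have h2 := gap_le l hK (ahDelta K l t) t
      have h3 := hzero t ht
      linarith
    rw [hD_eq] at hHle
    linarith
  -- main case
  set V : ℝ := ∑ t ∈ Finset.range T, ∑ k, ahWeight K l (ahDelta K l t) t k *
      (l t k - ahHedgeLoss K l (ahDelta K l t) t)^2 with hVdef
  clear_value V
  have hD2 : D^2 ≤ Real.log K * V + (2/3 * Real.log K + 1) * S * D := by
    rw [hDdef, hVdef]; exact delta_sq_le l hK T S hsS
  -- variance sum bound
  set a : ℕ → ℝ := fun t => ahHedgeLoss K l (ahDelta K l t) t - ⨅ k, l t k with hadef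
  clear_value a
  set s : ℕ → ℝ := fun t => (⨆ k, l t k) - ⨅ k, l t k with hsdef
  clear_value s
  have ha0 : ∀ t ∈ Finset.range T, 0 ≤ a t := by
    intro t _
    have := inf_le_hedge l (ahDelta K l t) t
    rw [hadef]; simp only []; linarith
  have has : ∀ t ∈ Finset.range T, a t ≤ s t := by
    intro t _
    have := hedge_le_sup l (ahDelta K l t) t
    rw [hadef, hsdef]; simp only []; linarith
  have hs0 : ∀ t ∈ Finset.range T, 0 ≤ s t := by
    intro t _
    rw [hsdef]
    exact hs_nonneg t
  have hsS' : ∀ t ∈ Finset.range T, s t ≤ S := by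
    intro t ht
    rw [hsdef]
    exact hsS t ht
  have hSigs : ∑ t ∈ Finset.range T, s t = Lplus - Lminus := hsum_s
  have hSiga : ∑ t ∈ Finset.range T, a t = H - Lminus := by
    rw [hadef, Finset.sum_sub_distrib, ← hHdef, ← hLminus]
  have hVle : V ≤ S * ((H - Lminus) * (Lplus - H) / (Lplus - Lminus)) := by
    have hq : ∀ t ∈ Finset.range T, ∑ k, ahWeight K l (ahDelta K l t) t k *
        (l t k - ahHedgeLoss K l (ahDelta K l t) t)^2 ≤
          S * (a t * (s t - a t) / s t) := by
      intro t ht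
      have h1 := variance_le l hK (ahDelta K l t) t
      have h2 : ((⨆ k, l t k) - ahHedgeLoss K l (ahDelta K l t) t) *
          (ahHedgeLoss K l (ahDelta K l t) t - ⨅ k, l t k) = (s t - a t) * a t := by
        rw [hadef, hsdef]; simp only []; ring
      rw [h2] at h1
      have h3 : (s t - a t) * a t ≤ S * (a t * (s t - a t) / s t) := by
        by_cases hst : s t = 0
        · have ha' : a t = 0 := le_antisymm (hst ▸ has t ht) (ha0 t ht)
          simp [hst, ha']
        · have hstpos : 0 < s t := lt_of_le_of_ne (hs0 t ht) (Ne.symm hst)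
          have he : (s t - a t) * a t = s t * (a t * (s t - a t) / s t) := by
            field_simp
          rw [he]
          apply mul_le_mul_of_nonneg_right (hsS' t ht)
          apply div_nonneg _ (hs0 t ht)
          exact mul_nonneg (ha0 t ht) (by linarith [has t ht])
      linarith
    have hVq : V ≤ S * ∑ t ∈ Finset.range T, (a t * (s t - a t) / s t) := by
      rw [hVdef, Finset.mul_sum]
      exact Finset.sum_le_sum hq
    have hcs := cs_q_bound T s a hs0 ha0 has (by rw [hSigs]; exact hSigpos)
    rw [hSigs, hSiga] at hcs
    have h4 : S * ∑ t ∈ Finset.range T, (a t * (s t - a t) / s t) ≤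
        S * ((H - Lminus) * ((Lplus - Lminus) - (H - Lminus)) / (Lplus - Lminus)) :=
      mul_le_mul_of_nonneg_left hcs hS0
    have h5 : (H - Lminus) * ((Lplus - Lminus) - (H - Lminus)) / (Lplus - Lminus) =
        (H - Lminus) * (Lplus - H) / (Lplus - Lminus) := by ring_nf
    rw [h5] at h4
    linarith
  -- product bound
  set R : ℝ := H - Lstar with hRdef
  clear_value R
  have hRpos : 0 < R := by rw [hRdef]; linarith
  have hR2D : R ≤ 2 * D := by rw [hRdef]; linarith
  have hprod : (H - Lminus) * (Lplus - H) ≤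
      (Lplus - Lstar) * (Lstar - Lminus) + R * (Lplus - Lminus) := by
    have e : H = Lstar + R := by rw [hRdef]; ring
    rw [e]
    nlinarith [hRpos.le, sub_nonneg.mpr hLms, sq_nonneg R,
      mul_nonneg hRpos.le (sub_nonneg.mpr hLms)]
  set B : ℝ := (Lplus - Lstar) * (Lstar - Lminus) / (Lplus - Lminus) with hBdef
  clear_value B
  have hB0 : 0 ≤ B := by
    rw [hBdef]
    apply div_nonneg _ hSigpos.le
    exact mul_nonneg (by linarith) (by linarith)
  have hdiv : (H - Lminus) * (Lplus - H) / (Lplus - Lminus) ≤ B + R := by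
    rw [div_le_iff₀ hSigpos, hBdef]
    have : (B + R) * (Lplus - Lminus) =
        (Lplus - Lstar) * (Lstar - Lminus) + R * (Lplus - Lminus) := by
      rw [hBdef]
      field_simp
    rw [hBdef] at this
    rw [this]
    exact hprod
  set X : ℝ := Real.sqrt (S * Real.log K * B) with hXdef
  clear_value X
  have hX0 : 0 ≤ X := by rw [hXdef]; exact Real.sqrt_nonneg _
  have hX2 : X^2 = S * Real.log K * B := by
    rw [hXdef]; exact Real.sq_sqrt (by positivity)
  set d : ℝ := (8/3 * Real.log K + 1) * S with hddef
  clear_value d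
  have hd0 : 0 ≤ d := by rw [hddef]; positivity
  -- master quadratic
  have hquad : D^2 ≤ X^2 + d * D := by
    have h1 : V ≤ S * (B + R) :=
      le_trans hVle (mul_le_mul_of_nonneg_left hdiv hS0)
    have h2 : Real.log K * V ≤ Real.log K * (S * (B + R)) :=
      mul_le_mul_of_nonneg_left h1 hc.le
    have h3 : Real.log K * (S * R) ≤ Real.log K * (S * (2*D)) :=
      mul_le_mul_of_nonneg_left (mul_le_mul_of_nonneg_left hR2D hS0) hc.le
    have e2 : Real.log K * (S*(B+R)) = Real.log K * S * B + Real.log K * (S * R) := by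
      ring
    rw [hX2, hddef]
    linarith only [hD2, h2, h3, e2]
  have hDle : D ≤ X + d := quad_solve hD0 hX0 hd0 hquad
  -- conclusion
  have hfinal : LM ≤ 2*Lstar + 4*X + 4*d := by
    calc LM ≤ 2*H := hLM2H
      _ ≤ 2*(Lstar + 2*D) := by linarith
      _ ≤ 2*(Lstar + 2*(X + d)) := by linarith
      _ = 2*Lstar + 4*X + 4*d := by ring
  have he1 : 4*d = 2 * S * (16 / 3 * Real.log K + 2) := by rw [hddef]; ring
  linarith only [hfinal, he1.le, he1.ge]
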